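/- Let H be a complex vector space and x_1,...,x_n ∈ H with dim span{x_1,...,x_n} = r where 0 < r < n. Then there exist a complex r×(n−r) matrix B with every entry of modulus at most 2^{2n}, and a permutation σ of {1,...,n}, such that (x_{σ(1)},...,x_{σ(n−r)}) = (x_{σ(n−r+1)},...,x_{σ(n)}) · B. -/

import Mathlib

noncomputable section

/-- if `dim span{x_1,...,x_n} = r` with `0 < r < n`, there exist a matrix `B` with
entries of modulus at most `2^(2n)` and a permutation `σ` such that
`(x_{σ(1)},...,x_{σ(n−r)}) = (x_{σ(n−r+1)},...,x_{σ(n)})·B`. -/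
theorem stmt4 {H : Type*} [AddCommGroup H] [Module ℂ H]
    (n r : ℕ) (hr0 : 0 < r) (hrn : r < n) (x : Fin n → H)
    (hdim : Module.finrank ℂ ↥(Submodule.span ℂ (Set.range x)) = r) :
    ∃ (B : Matrix (Fin r) (Fin (n - r)) ℂ) (σ : Equiv.Perm (Fin n)),
      (∀ i j, ‖B i j‖ ≤ 2 ^ (2 * n)) ∧
      (∀ j : Fin (n - r),
        x (σ ⟨(j : ℕ), by have := j.isLt; omega⟩) =
          ∑ i : Fin r, B i j • x (σ ⟨n - r + (i : ℕ), by have := i.isLt; omega⟩)) := by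
  classical
  set V := Submodule.span ℂ (Set.range x) with hV
  haveI : FiniteDimensional ℂ V := FiniteDimensional.span_of_finite ℂ (Set.finite_range x)
  have hx : ∀ k, x k ∈ V := fun k => Submodule.subset_span ⟨k, rfl⟩
  set y : Fin n → V := fun k => ⟨x k, hx k⟩ with hy
  -- the `y k` span `V`
  have htop : Submodule.span ℂ (Set.range y) = ⊤ := by
    rw [Submodule.eq_top_iff']
    rintro ⟨v, hv⟩
    refine Submodule.span_induction
      (p := fun w hw => (⟨w, hw⟩ : V) ∈ Submodule.span ℂ (Set.range y)) ?_ ?_ ?_ ?_ hv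
    · rintro w ⟨k, rfl⟩
      exact Submodule.subset_span ⟨k, rfl⟩
    · exact Submodule.zero_mem _
    · intro a b ha hb hpa hpb
      exact Submodule.add_mem _ hpa hpb
    · intro cc a ha hpa
      exact Submodule.smul_mem _ cc hpa
  -- fix a basis of `V` indexed by `Fin r`
  let e : Module.Basis (Fin r) ℂ V := Module.finBasisOfFinrankEq ℂ V hdim
  -- find an injective `g₀ : Fin r → Fin n` such that `y ∘ g₀` is a basis of `V`
  obtain ⟨b, hby, hbspan, hbind⟩ := exists_linearIndependent ℂ (Set.range y)
  have hbfin : b.Finite := (Set.finite_range y).subset hby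
  haveI : Fintype b := hbfin.fintype
  have hcard : Fintype.card b = r := by
    have h1 := finrank_span_set_eq_card hbind
    rw [hbspan, htop, finrank_top, hdim] at h1
    rw [h1, Set.toFinset_card]
  let ε : Fin r ≃ b := (Fintype.equivFinOfCardEq hcard).symm
  have hεy : ∀ i : Fin r, ∃ k, y k = (ε i : V) := fun i => hby (ε i).2
  let g0 : Fin r → Fin n := fun i => (hεy i).choose
  have hg0 : ∀ i, y (g0 i) = (ε i : V) := fun i => (hεy i).choose_spec
  have hrange : Set.range (y ∘ g0) = b := by
    ext v
    constructor
    · rintro ⟨i, rfl⟩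
      simp only [Function.comp_apply, hg0]
      exact (ε i).2
    · intro hv
      exact ⟨ε.symm ⟨v, hv⟩, by simp [Function.comp_apply, hg0]⟩
  have hspan0 : ⊤ ≤ Submodule.span ℂ (Set.range (y ∘ g0)) := by
    rw [hrange, hbspan, htop]
  let bb : Module.Basis (Fin r) ℂ V :=
    basisOfTopLeSpanOfCardEqFinrank (y ∘ g0) hspan0 (by simp [hdim])
  have hdet0 : (e.toMatrix (y ∘ g0)).det ≠ 0 := by
    have hbb : ⇑bb = y ∘ g0 := coe_basisOfTopLeSpanOfCardEqFinrank _ _ _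
    rw [← hbb]
    have h1 : e.toMatrix bb * bb.toMatrix e = 1 := Module.Basis.toMatrix_mul_toMatrix_flip e bb
    intro h
    have := congrArg Matrix.det h1
    rw [Matrix.det_mul, h, zero_mul, Matrix.det_one] at this
    exact zero_ne_one this
  -- choose `g` maximizing the modulus of the determinant
  haveI : Nonempty (Fin r) := ⟨⟨0, hr0⟩⟩
  haveI : Nonempty (Fin n) := ⟨⟨0, by omega⟩⟩
  obtain ⟨g, hgmax⟩ := Finite.exists_max
    (fun g : Fin r → Fin n => ‖(e.toMatrix (y ∘ g)).det‖)
  set A : Matrix (Fin r) (Fin r) ℂ := e.toMatrix (y ∘ g) with hA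
  have hDpos : 0 < ‖A.det‖ :=
    lt_of_lt_of_le (norm_pos_iff.mpr hdet0) (hgmax g0)
  have hAdet : A.det ≠ 0 := fun h => by simp [h] at hDpos
  have hginj : Function.Injective g := by
    intro i i' hii
    by_contra hne
    have : A.det = 0 := Matrix.det_zero_of_column_eq hne (fun k => by
      simp [hA, Module.Basis.toMatrix_apply, Function.comp_apply, hii])
    exact hAdet this
  -- coefficients via Cramer's rule
  set c : Fin n → Fin r → ℂ :=
    fun j i => (A.det)⁻¹ * Matrix.cramer A (fun a => e.repr (y j) a) i with hc
  have hmul : ∀ j : Fin n, A.mulVec (c j) = fun a => e.repr (y j) a := by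
    intro j
    have : c j = (A.det)⁻¹ • (Matrix.cramer A fun a => e.repr (y j) a) := rfl
    rw [this, Matrix.mulVec_smul, Matrix.mulVec_cramer, smul_smul,
      inv_mul_cancel₀ hAdet, one_smul]
  -- the key linear-combination identity
  have key : ∀ j : Fin n, x j = ∑ i : Fin r, c j i • x (g i) := by
    intro j
    have hkV : y j = ∑ i : Fin r, c j i • y (g i) := by
      apply e.repr.injective
      ext a
      have := congrFun (hmul j) a
      simp only [Matrix.mulVec, dotProduct, hA, Module.Basis.toMatrix_apply,
        Function.comp_apply] at this
      rw [map_sum]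
      simp only [map_smul, Finsupp.coe_finset_sum, Finsupp.coe_smul, Finset.sum_apply,
        Pi.smul_apply, smul_eq_mul]
      rw [← this]
      exact Finset.sum_congr rfl fun i _ => mul_comm _ _
    have := congrArg (Subtype.val : V → H) hkV
    simpa using this
  -- the bound on the coefficients
  have hbound : ∀ (j : Fin n) (i : Fin r), ‖c j i‖ ≤ 1 := by
    intro j i
    have hup : A.updateCol i (fun a => e.repr (y j) a)
        = e.toMatrix (y ∘ Function.update g i j) := by
      ext a l
      by_cases hl : l = i
      · subst hl
        simp [Matrix.updateCol_apply, Module.Basis.toMatrix_apply, Function.update_self]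
      · simp [Matrix.updateCol_apply, hl, Module.Basis.toMatrix_apply, hA,
          Function.update_of_ne hl]
    have hcram : Matrix.cramer A (fun a => e.repr (y j) a) i
        = (e.toMatrix (y ∘ Function.update g i j)).det := by
      rw [Matrix.cramer_apply, hup]
    rw [hc]
    simp only [norm_mul, norm_inv]
    rw [hcram]
    have hle : ‖(e.toMatrix (y ∘ Function.update g i j)).det‖
        ≤ ‖A.det‖ := hgmax _
    rw [inv_mul_le_iff₀ hDpos, mul_one]
    exact hle
  -- build the permutation
  set S : Finset (Fin n) := Finset.image g Finset.univ with hS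
  have hScard : S.card = r := by
    rw [hS, Finset.card_image_of_injective _ hginj, Finset.card_univ, Fintype.card_fin]
  have hSc : Sᶜ.card = n - r := by
    rw [Finset.card_compl, hScard, Fintype.card_fin]
  let comp : Fin (n - r) → Fin n := fun j => ((Sᶜ.orderIsoOfFin hSc) j : Fin n)
  have hcompmem : ∀ j, comp j ∈ Sᶜ := fun j => ((Sᶜ.orderIsoOfFin hSc) j).2
  have hcompinj : Function.Injective comp := fun a b hab => by
    have := (Sᶜ.orderIsoOfFin hSc).injective (Subtype.ext hab)
    exact this
  let f : Fin n → Fin n := fun k =>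
    if h : (k : ℕ) < n - r then comp ⟨k, h⟩
    else g ⟨(k : ℕ) - (n - r), by have := k.isLt; omega⟩
  have hfinj : Function.Injective f := by
    intro a b hab
    simp only [f] at hab
    by_cases ha : (a : ℕ) < n - r <;> by_cases hb : (b : ℕ) < n - r
    · rw [dif_pos ha, dif_pos hb] at hab
      have := hcompinj hab
      have h2 := congr_arg (fun t : Fin (n - r) => (t : ℕ)) this
      simp only at h2
      exact Fin.ext h2
    · rw [dif_pos ha, dif_neg hb] at hab
      exact absurd (hab ▸ Finset.mem_image_of_mem g (Finset.mem_univ _))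
        (Finset.mem_compl.mp (hcompmem _))
    · rw [dif_neg ha, dif_pos hb] at hab
      exact absurd (hab.symm ▸ Finset.mem_image_of_mem g (Finset.mem_univ _))
        (Finset.mem_compl.mp (hcompmem _))
    · rw [dif_neg ha, dif_neg hb] at hab
      have := hginj hab
      have h2 := congrArg Fin.val this
      simp only at h2
      have := a.isLt; have := b.isLt
      exact Fin.ext (by omega)
  let σ : Equiv.Perm (Fin n) := Equiv.ofBijective f (Finite.injective_iff_bijective.mp hfinj)
  have hσ1 : ∀ (j : Fin (n - r)) (h : (j : ℕ) < n), σ ⟨j, h⟩ = comp j := by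
    intro j h
    show f _ = _
    simp only [f]
    rw [dif_pos j.isLt]
  have hσ2 : ∀ (i : Fin r) (h : n - r + (i : ℕ) < n), σ ⟨n - r + (i : ℕ), h⟩ = g i := by
    intro i h
    show f _ = _
    simp only [f]
    rw [dif_neg (by omega)]
    congr 1
    exact Fin.ext (by simp)
  refine ⟨fun i j => c (comp j) i, σ, ?_, ?_⟩
  · intro i j
    refine (hbound (comp j) i).trans ?_
    exact one_le_pow₀ (by norm_num)
  · intro j
    rw [hσ1 j]
    rw [Finset.sum_congr rfl (fun i _ => by rw [hσ2 i])]
    exact key (comp j)
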